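/- Under pair Sato-Tate equidistribution for (C, D) and a(p) = C(p) - χ₁(p)/(2√p), b(p) = D(p) - χ₂(p)/(2√p), the sequence of products a(p)·b(p) over primes p changes sign infinitely often: there are infinitely many primes p with a(p)b(p) > 0 and infinitely many with a(p)b(p) < 0. -/
import Mathlib


open MeasureTheory Filter Real Set
open scoped ENNReal

noncomputable def muST : Measure ℝ :=
  (volume.restrict (Icc (-1 : ℝ) 1)).withDensity fun t =>
    ENNReal.ofReal ((2 / π) * Real.sqrt (1 - t ^ 2))

open scoped Classical in
noncomputable def primeCount (S : Set ℕ) (x : ℕ) : ℕ :=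
  ((Finset.range (x + 1)).filter fun p => p.Prime ∧ p ∈ S).card

noncomputable def primePi (x : ℕ) : ℕ :=
  ((Finset.range (x + 1)).filter Nat.Prime).card

def HasNaturalDensity (S : Set ℕ) (δ : ℝ) : Prop :=
  Tendsto (fun x : ℕ => (primeCount S x : ℝ) / (primePi x : ℝ)) atTop (nhds δ)

def PairSatoTateEquidistributed (C D : ℕ → ℝ) : Prop :=
  ∀ a₁ b₁ a₂ b₂ : ℝ, -1 ≤ a₁ → a₁ ≤ b₁ → b₁ ≤ 1 → -1 ≤ a₂ → a₂ ≤ b₂ → b₂ ≤ 1 →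
    Tendsto
      (fun x : ℕ =>
        (primeCount {p | C p ∈ Icc a₁ b₁ ∧ D p ∈ Icc a₂ b₂} x : ℝ) / (primePi x : ℝ))
      atTop (nhds ((muST (Icc a₁ b₁)).toReal * (muST (Icc a₂ b₂)).toReal))

lemma muST_density_measurable :
    Measurable fun t : ℝ => ENNReal.ofReal ((2 / π) * Real.sqrt (1 - t ^ 2)) := by
  exact Measurable.ennreal_ofReal (by fun_prop)

lemma muST_lt_top (a b : ℝ) : muST (Icc a b) < ⊤ := by
  have hs : MeasurableSet (Icc a b) := measurableSet_Icc
  rw [muST, withDensity_apply _ hs]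
  calc ∫⁻ t in Icc a b, ENNReal.ofReal ((2 / π) * Real.sqrt (1 - t ^ 2))
        ∂(volume.restrict (Icc (-1 : ℝ) 1))
      ≤ ∫⁻ _ in Icc a b, (1 : ℝ≥0∞) ∂(volume.restrict (Icc (-1 : ℝ) 1)) := by
        apply lintegral_mono
        intro t
        have h1 : Real.sqrt (1 - t ^ 2) ≤ 1 := by
          exact Real.sqrt_le_one.mpr (by nlinarith [sq_nonneg t])
        have h2 : (2 / π) * Real.sqrt (1 - t ^ 2) ≤ 1 := by
          have hπ : (2 : ℝ) < π := by nlinarith [Real.pi_gt_three]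
          have hnn : 0 ≤ Real.sqrt (1 - t ^ 2) := Real.sqrt_nonneg _
          have : (2 / π) ≤ 1 := by
            rw [div_le_one (by linarith)]; linarith
          nlinarith
        calc ENNReal.ofReal ((2 / π) * Real.sqrt (1 - t ^ 2))
            ≤ ENNReal.ofReal 1 := ENNReal.ofReal_le_ofReal h2
          _ = 1 := ENNReal.ofReal_one
    _ = (volume.restrict (Icc (-1 : ℝ) 1)) (Icc a b) := by
        rw [setLIntegral_one]
    _ ≤ volume (Icc (-1 : ℝ) 1) := by
        rw [Measure.restrict_apply hs]
        exact measure_mono inter_subset_right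
    _ < ⊤ := by
        rw [Real.volume_Icc]; exact ENNReal.ofReal_lt_top

lemma muST_pos (a b u v : ℝ) (h1 : -1 ≤ a) (hau : a ≤ u) (huv : u < v) (hvb : v ≤ b)
    (h2 : b ≤ 1) (hu : -3/4 ≤ u) (hv : v ≤ 3/4) : 0 < muST (Icc a b) := by
  have hsub : Icc a b ⊆ Icc (-1 : ℝ) 1 := Icc_subset_Icc h1 h2
  rw [muST, withDensity_apply _ measurableSet_Icc,
    Measure.restrict_restrict measurableSet_Icc, inter_eq_left.mpr hsub]
  set c : ℝ≥0∞ := ENNReal.ofReal ((2 / π) * Real.sqrt (7/16)) with hc_def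
  have hc : 0 < c := by
    apply ENNReal.ofReal_pos.mpr
    have : 0 < Real.sqrt (7/16) := Real.sqrt_pos.mpr (by norm_num)
    have hπ := Real.pi_pos
    positivity
  calc (0 : ℝ≥0∞) < c * volume (Icc u v) := by
        apply ENNReal.mul_pos hc.ne'
        rw [Real.volume_Icc]
        simp only [ne_eq, ENNReal.ofReal_eq_zero, not_le]
        linarith
    _ = ∫⁻ _ in Icc u v, c ∂volume := by rw [setLIntegral_const, mul_comm]
    _ ≤ ∫⁻ t in Icc u v, ENNReal.ofReal ((2 / π) * Real.sqrt (1 - t ^ 2)) ∂volume := by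
        apply setLIntegral_mono muST_density_measurable
        intro t ht
        apply ENNReal.ofReal_le_ofReal
        have hπ := Real.pi_pos
        have h7 : (7/16 : ℝ) ≤ 1 - t ^ 2 := by
          obtain ⟨htl, htr⟩ := ht
          nlinarith
        have := Real.sqrt_le_sqrt h7
        have h2π : 0 ≤ 2 / π := by positivity
        nlinarith [Real.sqrt_nonneg (7/16 : ℝ)]
    _ ≤ ∫⁻ t in Icc a b, ENNReal.ofReal ((2 / π) * Real.sqrt (1 - t ^ 2)) ∂volume :=
        lintegral_mono_set (Icc_subset_Icc hau hvb)

lemma primePi_atTop : Tendsto primePi atTop atTop := by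
  apply tendsto_atTop_atTop_of_monotone
  · intro m n h
    exact Finset.card_le_card
      (Finset.filter_subset_filter _ (Finset.range_subset_range.mpr (by omega)))
  · intro N
    obtain ⟨T, hTsub, hTcard⟩ := Nat.infinite_setOf_prime.exists_subset_card_eq N
    refine ⟨T.sup id, ?_⟩
    have hT : T ⊆ (Finset.range (T.sup id + 1)).filter Nat.Prime := by
      intro p hp
      simp only [Finset.mem_filter, Finset.mem_range]
      exact ⟨Nat.lt_succ_of_le (Finset.le_sup (f := id) hp), hTsub hp⟩
    calc N = T.card := hTcard.symm
      _ ≤ _ := Finset.card_le_card hT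

lemma infinite_of_density_pos (S : Set ℕ) {δ : ℝ} (hδ : 0 < δ)
    (h : Tendsto (fun x : ℕ => (primeCount S x : ℝ) / (primePi x : ℝ)) atTop (nhds δ)) :
    {p : ℕ | p.Prime ∧ p ∈ S}.Infinite := by
  classical
  by_contra hfin
  rw [Set.not_infinite] at hfin
  set N := hfin.toFinset.card with hN
  have hbound : ∀ x, primeCount S x ≤ N := by
    intro x
    apply Finset.card_le_card
    intro p hp
    simp only [primeCount, Finset.mem_filter] at hp
    simp only [Set.Finite.mem_toFinset, Set.mem_setOf_eq]
    exact hp.2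
  have hPi : Tendsto (fun x : ℕ => (primePi x : ℝ)) atTop atTop :=
    tendsto_natCast_atTop_atTop.comp primePi_atTop
  have h0 : Tendsto (fun x : ℕ => (primeCount S x : ℝ) / (primePi x : ℝ)) atTop (nhds 0) := by
    apply squeeze_zero (fun x => by positivity)
      (g := fun x : ℕ => (N : ℝ) / (primePi x : ℝ))
    · intro x
      gcongr
      exact_mod_cast hbound x
    · exact tendsto_const_nhds.div_atTop hPi
  have := tendsto_nhds_unique h h0
  linarith

lemma sub_chi_pos (p : ℕ) (hp : p.Prime) (x χv : ℝ)
    (hχ : χv = -1 ∨ χv = 0 ∨ χv = 1) (hx : 1/2 ≤ x) :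
    0 < x - χv / (2 * Real.sqrt p) := by
  have h2 : (2 : ℝ) ≤ (p : ℝ) := by exact_mod_cast hp.two_le
  have hs : 1 < Real.sqrt p := by
    rw [show (1 : ℝ) = Real.sqrt 1 from Real.sqrt_one.symm]
    exact Real.sqrt_lt_sqrt (by norm_num) (by linarith)
  have hpos : (0 : ℝ) < 2 * Real.sqrt p := by linarith
  have hχ1 : χv ≤ 1 := by rcases hχ with h | h | h <;> rw [h] <;> norm_num
  have hle : χv / (2 * Real.sqrt p) ≤ 1 / (2 * Real.sqrt p) := by gcongr
  have hlt : 1 / (2 * Real.sqrt p) < 1/2 := by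
    rw [div_lt_div_iff₀ hpos (by norm_num)]
    linarith
  linarith

lemma sub_chi_neg (p : ℕ) (hp : p.Prime) (x χv : ℝ)
    (hχ : χv = -1 ∨ χv = 0 ∨ χv = 1) (hx : x ≤ -(1/2)) :
    x - χv / (2 * Real.sqrt p) < 0 := by
  have h2 : (2 : ℝ) ≤ (p : ℝ) := by exact_mod_cast hp.two_le
  have hs : 1 < Real.sqrt p := by
    rw [show (1 : ℝ) = Real.sqrt 1 from Real.sqrt_one.symm]
    exact Real.sqrt_lt_sqrt (by norm_num) (by linarith)
  have hpos : (0 : ℝ) < 2 * Real.sqrt p := by linarith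
  have hχ1 : -1 ≤ χv := by rcases hχ with h | h | h <;> rw [h] <;> norm_num
  have hle : (-1 : ℝ) / (2 * Real.sqrt p) ≤ χv / (2 * Real.sqrt p) := by gcongr
  have hlt : -(1/2) < (-1 : ℝ) / (2 * Real.sqrt p) := by
    rw [neg_div, neg_lt_neg_iff, div_lt_div_iff₀ hpos (by norm_num)]
    linarith
  linarith

theorem product_changes_sign_infinitely_often (C D : ℕ → ℝ) (χ₁ χ₂ : ℕ → ℝ)
    (hC : ∀ p : ℕ, p.Prime → C p ∈ Icc (-1 : ℝ) 1)
    (hD : ∀ p : ℕ, p.Prime → D p ∈ Icc (-1 : ℝ) 1)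
    (hχ₁ : ∀ p : ℕ, χ₁ p = -1 ∨ χ₁ p = 0 ∨ χ₁ p = 1)
    (hχ₂ : ∀ p : ℕ, χ₂ p = -1 ∨ χ₂ p = 0 ∨ χ₂ p = 1)
    (hST : PairSatoTateEquidistributed C D) :
    {p : ℕ | p.Prime ∧
        0 < (C p - χ₁ p / (2 * Real.sqrt p)) * (D p - χ₂ p / (2 * Real.sqrt p))}.Infinite ∧
      {p : ℕ | p.Prime ∧
        (C p - χ₁ p / (2 * Real.sqrt p)) * (D p - χ₂ p / (2 * Real.sqrt p)) < 0}.Infinite := by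
  have hm1 : 0 < (muST (Icc (1/2 : ℝ) 1)).toReal :=
    ENNReal.toReal_pos
      (muST_pos (1/2) 1 (1/2) (3/4) (by norm_num) le_rfl (by norm_num) (by norm_num)
        le_rfl (by norm_num) le_rfl).ne' (muST_lt_top _ _).ne
  have hm2 : 0 < (muST (Icc (-1 : ℝ) (-(1/2)))).toReal :=
    ENNReal.toReal_pos
      (muST_pos (-1) (-(1/2)) (-(3/4)) (-(1/2)) le_rfl (by norm_num) (by norm_num) le_rfl
        (by norm_num) (by norm_num) (by norm_num)).ne' (muST_lt_top _ _).ne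
  constructor
  · have h := hST (1/2) 1 (1/2) 1 (by norm_num) (by norm_num) le_rfl (by norm_num)
      (by norm_num) le_rfl
    have hinf := infinite_of_density_pos _ (mul_pos hm1 hm1) h
    apply hinf.mono
    rintro p ⟨hpp, hmem⟩
    obtain ⟨hCp, hDp⟩ := hmem
    exact ⟨hpp, mul_pos (sub_chi_pos p hpp _ _ (hχ₁ p) hCp.1)
      (sub_chi_pos p hpp _ _ (hχ₂ p) hDp.1)⟩
  · have h := hST (1/2) 1 (-1) (-(1/2)) (by norm_num) (by norm_num) le_rfl le_rfl
      (by norm_num) (by norm_num)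
    have hinf := infinite_of_density_pos _ (mul_pos hm1 hm2) h
    apply hinf.mono
    rintro p ⟨hpp, hmem⟩
    obtain ⟨hCp, hDp⟩ := hmem
    exact ⟨hpp, mul_neg_of_pos_of_neg (sub_chi_pos p hpp _ _ (hχ₁ p) hCp.1)
      (sub_chi_neg p hpp _ _ (hχ₂ p) hDp.2)⟩
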